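/- Let Q₀ and Q₁ be probability measures on X, θ ≥ 0, and let 𝒫₀ and 𝒫₁ be the MMD uncertainty sets of radius θ centered at Q₀ and Q₁ respectively. Then: (i) for every P₀ ∈ 𝒫₀, (inf over P ∈ 𝒫₀ of ‖μ_{P₀} − μ_P‖_H) − (inf over P ∈ 𝒫₁ of ‖μ_{P₀} − μ_P‖_H) ≤ −‖μ_{Q₀} − μ_{Q₁}‖_H + 2θ; and (ii) for every P₁ ∈ 𝒫₁, (inf over P ∈ 𝒫₀ of ‖μ_{P₁} − μ_P‖_H) − (inf over P ∈ 𝒫₁ of ‖μ_{P₁} − μ_P‖_H) ≥ ‖μ_{Q₀} − μ_{Q₁}‖_H − 2θ. -/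

import Mathlib

open MeasureTheory
open scoped ENNReal

/-- Bounds on the direct robust kernel test statistic under the two hypotheses:
for `P₀ ∈ 𝒫₀` the statistic is at most `−‖μ_{Q₀}−μ_{Q₁}‖ + 2θ`, and for `P₁ ∈ 𝒫₁` it is
at least `‖μ_{Q₀}−μ_{Q₁}‖ − 2θ`. -/
theorem stmt13
    {X H : Type*} [MeasurableSpace X]
    [NormedAddCommGroup H] [InnerProductSpace ℝ H] [CompleteSpace H]
    (Φ : X → H) (hΦm : StronglyMeasurable Φ) (C : ℝ) (hΦb : ∀ x, ‖Φ x‖ ≤ C)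
    (Q₀ Q₁ : Measure X) [IsProbabilityMeasure Q₀] [IsProbabilityMeasure Q₁]
    (θ : ℝ) (hθ : 0 ≤ θ) :
    let μemb : Measure X → H := fun P => ∫ x, Φ x ∂P
    let 𝒫₀ : Set (Measure X) := {P | IsProbabilityMeasure P ∧ ‖μemb P - μemb Q₀‖ ≤ θ}
    let 𝒫₁ : Set (Measure X) := {P | IsProbabilityMeasure P ∧ ‖μemb P - μemb Q₁‖ ≤ θ}
    (∀ P₀ ∈ 𝒫₀,
      (⨅ P : ↥𝒫₀, ‖μemb P₀ - μemb (P : Measure X)‖)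
          - (⨅ P : ↥𝒫₁, ‖μemb P₀ - μemb (P : Measure X)‖)
        ≤ -‖μemb Q₀ - μemb Q₁‖ + 2 * θ) ∧
    (∀ P₁ ∈ 𝒫₁,
      ‖μemb Q₀ - μemb Q₁‖ - 2 * θ
        ≤ (⨅ P : ↥𝒫₀, ‖μemb P₁ - μemb (P : Measure X)‖)
            - (⨅ P : ↥𝒫₁, ‖μemb P₁ - μemb (P : Measure X)‖)) := by
  intro μemb 𝒫₀ 𝒫₁
  have hQ0 : Q₀ ∈ 𝒫₀ := ⟨inferInstance, by simp [hθ]⟩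
  have hQ1 : Q₁ ∈ 𝒫₁ := ⟨inferInstance, by simp [hθ]⟩
  haveI : Nonempty ↥𝒫₀ := ⟨⟨Q₀, hQ0⟩⟩
  haveI : Nonempty ↥𝒫₁ := ⟨⟨Q₁, hQ1⟩⟩
  have hbdd : ∀ (P : Measure X), BddBelow (Set.range fun (R : ↥𝒫₀) => ‖μemb P - μemb (R : Measure X)‖) :=
    fun P => ⟨0, by rintro _ ⟨R, rfl⟩; exact norm_nonneg _⟩
  have hbdd1 : ∀ (P : Measure X), BddBelow (Set.range fun (R : ↥𝒫₁) => ‖μemb P - μemb (R : Measure X)‖) :=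
    fun P => ⟨0, by rintro _ ⟨R, rfl⟩; exact norm_nonneg _⟩
  -- key triangle estimate
  have key : ∀ (A B : Measure X) (QA QB : Measure X),
      ‖μemb A - μemb QA‖ ≤ θ → ‖μemb B - μemb QB‖ ≤ θ →
      ‖μemb QA - μemb QB‖ - 2 * θ ≤ ‖μemb A - μemb B‖ := by
    intro A B QA QB hA hB
    have h1 : ‖μemb QA - μemb QB‖ ≤ ‖μemb QA - μemb A‖ + ‖μemb A - μemb B‖ + ‖μemb B - μemb QB‖ := by
      calc ‖μemb QA - μemb QB‖ ≤ ‖μemb QA - μemb A‖ + ‖μemb A - μemb QB‖ := norm_sub_le_norm_sub_add_norm_sub _ _ _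
        _ ≤ ‖μemb QA - μemb A‖ + (‖μemb A - μemb B‖ + ‖μemb B - μemb QB‖) := by
            exact add_le_add le_rfl (norm_sub_le_norm_sub_add_norm_sub _ _ _)
        _ = _ := by ring
    have hA' : ‖μemb QA - μemb A‖ ≤ θ := by rwa [norm_sub_rev]
    linarith
  constructor
  · intro P₀ hP₀
    have h0 : (⨅ P : ↥𝒫₀, ‖μemb P₀ - μemb (P : Measure X)‖) ≤ 0 := by
      have := ciInf_le (hbdd P₀) (⟨P₀, hP₀⟩ : ↥𝒫₀)
      simpa using this
    have h1 : ‖μemb Q₀ - μemb Q₁‖ - 2 * θ ≤ ⨅ P : ↥𝒫₁, ‖μemb P₀ - μemb (P : Measure X)‖ := by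
      refine le_ciInf fun P => key P₀ P Q₀ Q₁ hP₀.2 P.2.2
    linarith
  · intro P₁ hP₁
    have h0 : (⨅ P : ↥𝒫₁, ‖μemb P₁ - μemb (P : Measure X)‖) ≤ 0 := by
      have := ciInf_le (hbdd1 P₁) (⟨P₁, hP₁⟩ : ↥𝒫₁)
      simpa using this
    have h1 : ‖μemb Q₀ - μemb Q₁‖ - 2 * θ ≤ ⨅ P : ↥𝒫₀, ‖μemb P₁ - μemb (P : Measure X)‖ := by
      refine le_ciInf fun P => ?_
      have := key P P₁ Q₀ Q₁ P.2.2 hP₁.2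
      rwa [norm_sub_rev (μemb P)] at this
    linarith
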